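/- Fix σ = 10, r = 27, β = 8/3 and let 0 < d ≤ 20. Then the map F_d(x,y) = ((σ/d)(x − β r x/(β + x²)) + 2x − y, x) has infinitely many periodic points: the set {w ∈ ℝ² : there exists n ≥ 1 with F_d^[n](w) = w} is infinite. -/

import Mathlib

noncomputable section Stmt12Aux

def phiF (c x : ℝ) : ℝ := c * (x - 72 * x / (8/3 + x^2))
def GF (c x : ℝ) : ℝ := phiF c x + 2*x
def VF (c x : ℝ) : ℝ := c * (x^2/2 - 36 * Real.log (8/3 + x^2))
def C0 : ℝ := 36 * Real.log 144 - 36 + 2/3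

lemma denom_pos (x : ℝ) : 0 < 8/3 + x^2 := by positivity

lemma GF_neg (c x : ℝ) : GF c (-x) = -GF c x := by
  simp only [GF, phiF]; ring

lemma GF_zero (c : ℝ) : GF c 0 = 0 := by simp [GF, phiF]

lemma hasDerivAt_VF (c x : ℝ) : HasDerivAt (VF c) (phiF c x) x := by
  have h1 : HasDerivAt (fun x : ℝ => 8/3 + x^2) (2*x) x := by
    simpa using ((hasDerivAt_pow 2 x).const_add (8/3 : ℝ))
  have h2 : HasDerivAt (fun x : ℝ => Real.log (8/3 + x^2)) (2*x/(8/3+x^2)) x := by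
    simpa [div_eq_mul_inv, mul_comm, Function.comp_def] using
      (Real.hasDerivAt_log (denom_pos x).ne').comp x h1
  have h3 : HasDerivAt (fun x : ℝ => x^2/2 - 36 * Real.log (8/3 + x^2))
      (x - 36 * (2*x/(8/3+x^2))) x := by
    have := ((hasDerivAt_pow 2 x).div_const 2).sub (h2.const_mul 36)
    simpa [mul_comm, Pi.sub_def] using this
  have h4 := h3.const_mul c
  have : c * (x - 36 * (2*x/(8/3+x^2))) = phiF c x := by
    have h := (denom_pos x).ne'
    simp only [phiF]
    field_simp
    ring_nf
  rw [this] at h4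
  exact h4

lemma VF_lb {c : ℝ} (hc : 0 ≤ c) (x : ℝ) : c * (x^2/4 - C0) ≤ VF c x := by
  have hlog : Real.log (8/3 + x^2) ≤ Real.log 144 + ((8/3 + x^2)/144 - 1) := by
    have h1 : Real.log ((8/3 + x^2)/144) ≤ (8/3 + x^2)/144 - 1 :=
      Real.log_le_sub_one_of_pos (by positivity)
    have h2 : Real.log ((8/3 + x^2)/144) = Real.log (8/3 + x^2) - Real.log 144 :=
      Real.log_div (denom_pos x).ne' (by norm_num)
    linarith [h1, h2.symm.le, h2.ge]
  have : x^2/4 - C0 ≤ x^2/2 - 36 * Real.log (8/3 + x^2) := by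
    simp only [C0]; nlinarith [hlog]
  exact mul_le_mul_of_nonneg_left this hc

def zext (m : ℕ) (hm : 0 < m) (u : Fin m → ℝ) (i : ℕ) : ℝ :=
  (-1 : ℝ)^(i / m) * u ⟨i % m, Nat.mod_lt _ hm⟩

def eps (m : ℕ) (j : Fin m) (i : ℕ) : ℝ :=
  (-1 : ℝ)^(i / m) * (if i % m = (j : ℕ) then 1 else 0)

lemma zext_lt {m : ℕ} (hm : 0 < m) (u : Fin m → ℝ) {i : ℕ} (h : i < m) :
    zext m hm u i = u ⟨i, h⟩ := by
  simp [zext, Nat.div_eq_of_lt h, Nat.mod_eq_of_lt h]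

lemma zext_add {m : ℕ} (hm : 0 < m) (u : Fin m → ℝ) (i : ℕ) :
    zext m hm u (i + m) = - zext m hm u i := by
  have h1 : (i + m) / m = i / m + 1 := by
    rw [Nat.add_div_right _ hm]
  have h2 : (i + m) % m = i % m := Nat.add_mod_right i m
  simp [zext, h1, h2, pow_succ]

lemma zext_zero {m : ℕ} (hm : 0 < m) (i : ℕ) : zext m hm (0 : Fin m → ℝ) i = 0 := by
  simp [zext]

lemma zext_linear {m : ℕ} (hm : 0 < m) (u : Fin m → ℝ) (j : Fin m) (t : ℝ) (i : ℕ) :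
    zext m hm (u + t • (Pi.single j 1 : Fin m → ℝ)) i = zext m hm u i + t * eps m j i := by
  simp only [zext, eps, Pi.add_apply, Pi.smul_apply, Pi.single_apply, smul_eq_mul]
  have : (⟨i % m, Nat.mod_lt _ hm⟩ : Fin m) = j ↔ i % m = (j : ℕ) := by
    rw [Fin.ext_iff]
  by_cases h : i % m = (j : ℕ) <;> simp [this, h] <;> ring

lemma eps_lt {m : ℕ} (j : Fin m) {i : ℕ} (h : i < m) :
    eps m j i = if i = (j : ℕ) then 1 else 0 := by
  simp [eps, Nat.div_eq_of_lt h, Nat.mod_eq_of_lt h]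

lemma eps_m {m : ℕ} (hm : 0 < m) (j : Fin m) :
    eps m j m = if (j : ℕ) = 0 then -1 else 0 := by
  have h1 : m / m = 1 := Nat.div_self hm
  have h2 : m % m = 0 := Nat.mod_self m
  simp [eps, h1, h2, eq_comm]

def WF (c : ℝ) (m : ℕ) (hm : 0 < m) (u : Fin m → ℝ) : ℝ :=
  ∑ i ∈ Finset.range m,
    ((zext m hm u (i+1) - zext m hm u i)^2/2 + VF c (zext m hm u i))

lemma continuous_zext (m : ℕ) (hm : 0 < m) (i : ℕ) :
    Continuous (fun u : Fin m → ℝ => zext m hm u i) := by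
  unfold zext
  exact continuous_const.mul (continuous_apply _)

lemma continuous_WF (c : ℝ) (m : ℕ) (hm : 0 < m) : Continuous (WF c m hm) := by
  apply continuous_finset_sum
  intro i _
  have hz := continuous_zext m hm
  have hV : Continuous (VF c) := by
    have : Continuous (fun x : ℝ => Real.log (8/3 + x^2)) :=
      ((continuous_const.add (continuous_pow 2))).log (fun x => (denom_pos x).ne')
    exact continuous_const.mul ((continuous_pow 2 |>.div_const 2).sub (continuous_const.mul this))
  exact ((((hz (i+1)).sub (hz i)).pow 2).div_const 2).add (hV.comp (hz i))

lemma hasDerivAt_section (c : ℝ) (m : ℕ) (hm : 0 < m) (u : Fin m → ℝ) (j : Fin m) :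
    HasDerivAt (fun t : ℝ => WF c m hm (u + t • (Pi.single j 1 : Fin m → ℝ)))
      (∑ i ∈ Finset.range m,
        ((zext m hm u (i+1) - zext m hm u i) * (eps m j (i+1) - eps m j i)
          + phiF c (zext m hm u i) * eps m j i)) 0 := by
  have hfun : (fun t : ℝ => WF c m hm (u + t • (Pi.single j 1 : Fin m → ℝ)))
      = (fun t : ℝ => ∑ i ∈ Finset.range m,
          (((zext m hm u (i+1) + t * eps m j (i+1)) - (zext m hm u i + t * eps m j i))^2/2
            + VF c (zext m hm u i + t * eps m j i))) := by
    funext t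
    unfold WF
    refine Finset.sum_congr rfl (fun i _ => ?_)
    rw [zext_linear, zext_linear]
  rw [hfun]
  apply HasDerivAt.fun_sum
  intro i _
  set A := zext m hm u (i+1)
  set B := zext m hm u i
  set a := eps m j (i+1)
  set b := eps m j i
  have hA : HasDerivAt (fun t : ℝ => A + t * a) a 0 := by
    simpa using ((hasDerivAt_id (0:ℝ)).mul_const a).const_add A
  have hB : HasDerivAt (fun t : ℝ => B + t * b) b 0 := by
    simpa using ((hasDerivAt_id (0:ℝ)).mul_const b).const_add B
  have h1 : HasDerivAt (fun t : ℝ => ((A + t * a) - (B + t * b))^2/2)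
      ((A - B) * (a - b)) 0 := by
    have h := (((hA.sub hB).pow 2).div_const 2)
    exact h.congr_deriv (by simp only [Pi.sub_apply]; ring)
  have h2 : HasDerivAt (fun t : ℝ => VF c (B + t * b)) (phiF c B * b) 0 := by
    have h := (hasDerivAt_VF c (B + 0 * b)).comp (0:ℝ) hB
    simpa [Function.comp_def] using h
  simpa [Pi.add_def] using h1.add h2
lemma EL_of_critical (c : ℝ) (m : ℕ) (hm4 : 4 ≤ m) (hm : 0 < m) (u : Fin m → ℝ)
    (hcrit : ∀ j : Fin m, ∑ i ∈ Finset.range m,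
      ((zext m hm u (i+1) - zext m hm u i) * (eps m j (i+1) - eps m j i)
        + phiF c (zext m hm u i) * eps m j i) = 0) :
    ∀ i, zext m hm u (i+2) = GF c (zext m hm u (i+1)) - zext m hm u i := by
  set z := zext m hm u with hz
  have hTdef : ∀ (j : Fin m) (i : ℕ),
      ((z (i+1) - z i) * (eps m j (i+1) - eps m j i) + phiF c (z i) * eps m j i)
      = ((z (i+1) - z i) * (eps m j (i+1) - eps m j i) + phiF c (z i) * eps m j i) :=
    fun _ _ => rfl
  -- interior equations: for k with k + 2 ≤ m, i.e. k ≤ m - 2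
  have hint : ∀ k : ℕ, k + 2 ≤ m → z (k+2) = GF c (z (k+1)) - z k := by
    intro k hk
    have hjlt : k + 1 < m := by omega
    set j : Fin m := ⟨k+1, hjlt⟩ with hj
    have hjv : (j : ℕ) = k + 1 := rfl
    have hsum := hcrit j
    set T : ℕ → ℝ := fun i =>
      ((z (i+1) - z i) * (eps m j (i+1) - eps m j i) + phiF c (z i) * eps m j i) with hT
    have hmem1 : k + 1 ∈ Finset.range m := Finset.mem_range.mpr hjlt
    have hmem0 : k ∈ (Finset.range m).erase (k+1) := by
      simp [Finset.mem_erase]; omega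
    have e1 : ∑ i ∈ (Finset.range m).erase (k+1), T i + T (k+1) = ∑ i ∈ Finset.range m, T i :=
      Finset.sum_erase_add _ _ hmem1
    have e2 : ∑ i ∈ ((Finset.range m).erase (k+1)).erase k, T i + T k
        = ∑ i ∈ (Finset.range m).erase (k+1), T i :=
      Finset.sum_erase_add _ _ hmem0
    have hrest : ∑ i ∈ ((Finset.range m).erase (k+1)).erase k, T i = 0 := by
      apply Finset.sum_eq_zero
      intro i hi
      simp only [Finset.mem_erase, Finset.mem_range] at hi
      obtain ⟨hik, hik1, him⟩ := hi
      have hei : eps m j i = 0 := by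
        rw [eps_lt j him, hjv]; simp; omega
      have hei1 : eps m j (i+1) = 0 := by
        rcases Nat.lt_or_ge (i+1) m with h | h
        · rw [eps_lt j h, hjv]; simp; omega
        · have : i + 1 = m := by omega
          rw [this, eps_m hm j, hjv]; simp
      simp [hT, hei, hei1]
    have hTk : T k = z (k+1) - z k := by
      have he0 : eps m j k = 0 := by
        rw [eps_lt j (by omega : k < m), hjv]; simp
      have he1 : eps m j (k+1) = 1 := by
        rw [eps_lt j hjlt, hjv]; simp
      simp [hT, he0, he1]
    have hTk1 : T (k+1) = -(z (k+2) - z (k+1)) + phiF c (z (k+1)) := by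
      have he1 : eps m j (k+1) = 1 := by
        rw [eps_lt j hjlt, hjv]; simp
      have he2 : eps m j (k+2) = 0 := by
        rcases Nat.lt_or_ge (k+2) m with h | h
        · rw [eps_lt j h, hjv]; simp
        · have : k + 2 = m := by omega
          rw [this, eps_m hm j, hjv]; simp
      rw [hT]; simp only [he1, he2]; ring
    have : T k + T (k+1) = 0 := by
      have := hsum
      rw [← e1, ← e2, hrest] at this
      linarith
    rw [hTk, hTk1] at this
    simp only [GF]
    linarith
  -- wrap equation: P (m-1)
  have hwrap : ∀ k : ℕ, k + 1 = m → z (k+2) = GF c (z (k+1)) - z k := by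
    intro k hk
    set j : Fin m := ⟨0, hm⟩ with hj
    have hjv : (j : ℕ) = 0 := rfl
    have hsum := hcrit j
    set T : ℕ → ℝ := fun i =>
      ((z (i+1) - z i) * (eps m j (i+1) - eps m j i) + phiF c (z i) * eps m j i) with hT
    have hmem1 : k ∈ Finset.range m := Finset.mem_range.mpr (by omega)
    have hmem0 : 0 ∈ (Finset.range m).erase k := by
      simp [Finset.mem_erase]; omega
    have e1 : ∑ i ∈ (Finset.range m).erase k, T i + T k = ∑ i ∈ Finset.range m, T i :=
      Finset.sum_erase_add _ _ hmem1
    have e2 : ∑ i ∈ ((Finset.range m).erase k).erase 0, T i + T 0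
        = ∑ i ∈ (Finset.range m).erase k, T i :=
      Finset.sum_erase_add _ _ hmem0
    have hrest : ∑ i ∈ ((Finset.range m).erase k).erase 0, T i = 0 := by
      apply Finset.sum_eq_zero
      intro i hi
      simp only [Finset.mem_erase, Finset.mem_range] at hi
      obtain ⟨hi0, hik, him⟩ := hi
      have hei : eps m j i = 0 := by
        rw [eps_lt j him, hjv]; simp; omega
      have hei1 : eps m j (i+1) = 0 := by
        have h : i + 1 < m := by omega
        rw [eps_lt j h, hjv]; simp
      simp [hT, hei, hei1]
    have hT0 : T 0 = -(z 1 - z 0) + phiF c (z 0) := by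
      have he0 : eps m j 0 = 1 := by
        rw [eps_lt j hm, hjv]; simp
      have he1 : eps m j 1 = 0 := by
        rw [eps_lt j (by omega : 1 < m), hjv]; simp
      rw [hT]; simp only [he0, he1]; ring
    have hTk : T k = -(z (k+1) - z k) * 1 := by
      have he0 : eps m j k = 0 := by
        rw [eps_lt j (by omega : k < m), hjv]; simp; omega
      have he1 : eps m j (k+1) = -1 := by
        rw [hk, eps_m hm j, hjv]; simp
      rw [hT]; simp only [he0, he1]; ring
    have hsum0 : T 0 + T k = 0 := by
      have := hsum
      rw [← e1, ← e2, hrest] at this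
      linarith
    -- z (k+1) = z m = - z 0 ; z (k+2) = z (m+1) = - z 1
    have hzm : z (k+1) = - z 0 := by
      rw [show k + 1 = 0 + m by omega]
      exact zext_add hm u 0
    have hzm1 : z (k+2) = - z 1 := by
      rw [show k + 2 = 1 + m by omega]
      exact zext_add hm u 1
    rw [hT0, hTk] at hsum0
    rw [hzm, hzm1, GF_neg]
    simp only [GF]
    linarith
  -- base: all i with i + 2 ≤ m + 1
  have hbase : ∀ i : ℕ, i < m → z (i+2) = GF c (z (i+1)) - z i := by
    intro i hi
    rcases Nat.lt_or_ge (i+2) (m+1) with h | h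
    · exact hint i (by omega)
    · exact hwrap i (by omega)
  -- extension
  have hstep : ∀ i : ℕ, z (i+2) = GF c (z (i+1)) - z i →
      z (i+m+2) = GF c (z (i+m+1)) - z (i+m) := by
    intro i hP
    have h2 : z (i+m+2) = - z (i+2) := by
      rw [show i+m+2 = (i+2)+m by omega]
      exact zext_add hm u (i+2)
    have h1 : z (i+m+1) = - z (i+1) := by
      rw [show i+m+1 = (i+1)+m by omega]
      exact zext_add hm u (i+1)
    have h0 : z (i+m) = - z i := zext_add hm u i
    rw [h2, h1, h0, GF_neg, hP]
    ring
  have hall : ∀ k i : ℕ, i < m → z (i + k*m + 2) = GF c (z (i + k*m + 1)) - z (i + k*m) := by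
    intro k
    induction k with
    | zero => intro i hi; simpa using hbase i hi
    | succ n ih =>
      intro i hi
      have := hstep (i + n*m) (ih i hi)
      have heq : i + (n+1)*m = i + n*m + m := by ring
      rw [heq]
      convert this using 3 <;> omega
  intro i
  have := hall (i / m) (i % m) (Nat.mod_lt _ hm)
  have heq : i % m + (i / m) * m = i := by
    rw [Nat.mod_add_div' i m]
  rw [heq] at this
  exact this
lemma WF_zero (c : ℝ) (m : ℕ) (hm : 0 < m) :
    WF c m hm 0 = m * (c * (-(36 * Real.log (8/3)))) := by
  unfold WF
  have h : ∀ i ∈ Finset.range m,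
      ((zext m hm (0 : Fin m → ℝ) (i+1) - zext m hm (0:Fin m → ℝ) i)^2/2
        + VF c (zext m hm (0:Fin m → ℝ) i)) = c * (-(36 * Real.log (8/3))) := by
    intro i _
    rw [zext_zero, zext_zero]
    simp [VF]
  rw [Finset.sum_congr rfl h, Finset.sum_const, Finset.card_range, nsmul_eq_mul]

lemma VF_zero (c : ℝ) : VF c 0 = c * (-(36 * Real.log (8/3))) := by simp [VF]

lemma exists_min (c : ℝ) (hc : 1/2 ≤ c) (m : ℕ) (hm : 0 < m) :
    ∃ u : Fin m → ℝ, ∀ v, WF c m hm u ≤ WF c m hm v := by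
  have hc0 : 0 < c := by linarith
  set Q : ℝ := max (4*(m*C0 - 36*m*Real.log (8/3))) 0 + 1 with hQ
  have hQ0 : 0 ≤ Q := by positivity
  set R : ℝ := Real.sqrt Q with hR
  have hR0 : 0 ≤ R := Real.sqrt_nonneg _
  have hRsq : R^2 = Q := Real.sq_sqrt hQ0
  have hRQ : 4*(m*C0 - 36*m*Real.log (8/3)) ≤ R^2 := by
    rw [hRsq, hQ]
    have := le_max_left (4*((m:ℝ)*C0 - 36*m*Real.log (8/3))) 0
    linarith
  -- lower bound outside the ball
  have hout : ∀ v : Fin m → ℝ, R < ‖v‖ → WF c m hm 0 ≤ WF c m hm v := by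
    intro v hv
    -- find a big coordinate
    have hbig : ∃ j : Fin m, R < |v j| := by
      by_contra h
      push_neg at h
      have : ‖v‖ ≤ R := by
        rw [pi_norm_le_iff_of_nonneg hR0]
        intro i
        simpa [Real.norm_eq_abs] using h i
      linarith
    obtain ⟨j0, hj0⟩ := hbig
    set z := zext m hm v with hz
    have hsum1 : ∑ i ∈ Finset.range m, VF c (z i) ≤ WF c m hm v := by
      unfold WF
      apply Finset.sum_le_sum
      intro i _
      have : 0 ≤ (z (i+1) - z i)^2/2 := by positivity
      rw [← hz]
      linarith
    have hmem : (j0 : ℕ) ∈ Finset.range m := Finset.mem_range.mpr j0.isLt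
    have e1 : ∑ i ∈ (Finset.range m).erase (j0:ℕ), VF c (z i) + VF c (z (j0:ℕ))
        = ∑ i ∈ Finset.range m, VF c (z i) :=
      Finset.sum_erase_add _ _ hmem
    have hrest : (((m:ℝ) - 1) * (-(c * C0))) ≤ ∑ i ∈ (Finset.range m).erase (j0:ℕ), VF c (z i) := by
      have hcard : ((Finset.range m).erase (j0:ℕ)).card = m - 1 := by
        rw [Finset.card_erase_of_mem hmem, Finset.card_range]
      calc ((m:ℝ) - 1) * (-(c * C0))
          = ∑ _i ∈ (Finset.range m).erase (j0:ℕ), (-(c * C0)) := by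
            rw [Finset.sum_const, hcard, nsmul_eq_mul]
            have : ((m - 1 : ℕ) : ℝ) = (m:ℝ) - 1 := by
              have : 1 ≤ m := hm
              push_cast [Nat.cast_sub this]
              ring
            rw [this]
        _ ≤ ∑ i ∈ (Finset.range m).erase (j0:ℕ), VF c (z i) := by
            apply Finset.sum_le_sum
            intro i _
            have h1 := VF_lb hc0.le (z i)
            nlinarith [sq_nonneg (z i), hc0.le]
    have hj0v : z (j0:ℕ) = v j0 := by
      rw [hz, zext_lt hm v j0.isLt]
    have hbig2 : c * (R^2/4 - C0) ≤ VF c (z (j0:ℕ)) := by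
      have h1 := VF_lb hc0.le (z (j0:ℕ))
      have h2 : R^2 ≤ (z (j0:ℕ))^2 := by
        rw [hj0v]
        nlinarith [hj0, hR0, sq_abs (v j0), abs_nonneg (v j0)]
      nlinarith
    have hWF0 : WF c m hm 0 = m * (c * (-(36 * Real.log (8/3)))) := WF_zero c m hm
    have hC0 : ((m:ℝ) - 1) * (-(c * C0)) + c * (R^2/4 - C0) = c * R^2/4 - m * (c * C0) := by
      ring
    have hfin : m * (c * (-(36 * Real.log (8/3)))) ≤ c * R^2/4 - m * (c * C0) := by
      nlinarith [hRQ, hc0]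
    linarith [hsum1, e1, hrest, hbig2]
  -- minimum on closed ball
  have hcomp : IsCompact (Metric.closedBall (0 : Fin m → ℝ) R) := isCompact_closedBall _ _
  have hne : (Metric.closedBall (0 : Fin m → ℝ) R).Nonempty :=
    ⟨0, Metric.mem_closedBall_self hR0⟩
  obtain ⟨u, huK, humin⟩ := hcomp.exists_isMinOn hne (continuous_WF c m hm).continuousOn
  refine ⟨u, fun v => ?_⟩
  by_cases hv : v ∈ Metric.closedBall (0 : Fin m → ℝ) R
  · exact humin hv
  · have h0 : WF c m hm u ≤ WF c m hm 0 := humin (Metric.mem_closedBall_self hR0)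
    have hvn : R < ‖v‖ := by
      rw [Metric.mem_closedBall, dist_zero_right] at hv
      linarith [not_le.mp hv]
    exact h0.trans (hout v hvn)

lemma log27 : 3 ≤ Real.log 27 := by
  have h3 : (27:ℝ) = 3^3 := by norm_num
  rw [h3, Real.log_pow]
  have he : Real.exp 1 ≤ 3 := by
    have := Real.exp_one_lt_d9
    linarith
  have : Real.log (Real.exp 1) ≤ Real.log 3 := Real.log_le_log (Real.exp_pos 1) he
  rw [Real.log_exp] at this
  push_cast
  linarith

lemma min_lt (c : ℝ) (hc : 1/2 ≤ c) (m : ℕ) (hm4 : 4 ≤ m) (hm : 0 < m) :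
    WF c m hm (fun _ => Real.sqrt (208/3)) < WF c m hm 0 := by
  set s : ℝ := Real.sqrt (208/3) with hs
  have hs2 : s^2 = 208/3 := Real.sq_sqrt (by norm_num)
  set u : Fin m → ℝ := (fun _ => s) with hu
  set z := zext m hm u with hz
  have hzi : ∀ i < m, z i = s := fun i hi => zext_lt hm u hi
  have hzm : z m = -s := by
    have h := zext_add hm u 0
    rw [← hz] at h
    have h0 : z 0 = s := hzi 0 hm
    rw [show m = 0 + m by omega, h, h0]
  -- value of VF at s
  have hVs : VF c s = c * (104/3 - 36 * Real.log 72) := by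
    rw [VF, hs2]
    norm_num
  -- sum splits
  have hsplit : WF c m hm u = (m:ℝ) * VF c s + 2 * (208/3) := by
    unfold WF
    rw [← hz]
    obtain ⟨m', rfl⟩ : ∃ m', m = m' + 1 := ⟨m - 1, by omega⟩
    rw [Finset.sum_range_succ]
    have hterms : ∀ i ∈ Finset.range m', ((z (i+1) - z i)^2/2 + VF c (z i)) = VF c s := by
      intro i hi
      have hi' := Finset.mem_range.mp hi
      rw [hzi i (by omega), hzi (i+1) (by omega)]
      ring_nf
    rw [Finset.sum_congr rfl hterms, Finset.sum_const, Finset.card_range, nsmul_eq_mul]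
    rw [hzi m' (by omega), hzm]
    have : (-s - s)^2/2 = 2 * (208/3) := by
      have : (-s - s)^2 = 4 * s^2 := by ring
      rw [this, hs2]; ring
    rw [this]
    push_cast
    ring
  rw [hsplit, WF_zero, hVs]
  -- the key inequality
  have hlog : Real.log 72 - Real.log (8/3) = Real.log 27 := by
    rw [← Real.log_div (by norm_num) (by norm_num)]
    norm_num
  have hL := log27
  have hmc : (2:ℝ) ≤ (m:ℝ) * c := by
    have hm4' : (4:ℝ) ≤ (m:ℝ) := by exact_mod_cast hm4
    nlinarith
  nlinarith [hmc, hL, hlog, hm4]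
lemma exists_seq (c : ℝ) (hc : 1/2 ≤ c) (m : ℕ) (hm4 : 4 ≤ m) :
    ∃ z : ℕ → ℝ, (∀ i, z (i+2) = GF c (z (i+1)) - z i) ∧ (∀ i, z (i+m) = -z i) ∧
      ¬(z 0 = 0 ∧ z 1 = 0) := by
  have hm : 0 < m := by omega
  obtain ⟨u, hmin⟩ := exists_min c hc m hm
  have hcrit : ∀ j : Fin m, ∑ i ∈ Finset.range m,
      ((zext m hm u (i+1) - zext m hm u i) * (eps m j (i+1) - eps m j i)
        + phiF c (zext m hm u i) * eps m j i) = 0 := by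
    intro j
    have hd := hasDerivAt_section c m hm u j
    have hloc : IsLocalMin (fun t : ℝ => WF c m hm (u + t • (Pi.single j 1 : Fin m → ℝ))) 0 := by
      refine Filter.Eventually.of_forall (fun t => ?_)
      simp only [zero_smul, add_zero]
      exact hmin _
    have h0 := hloc.deriv_eq_zero
    rw [hd.deriv] at h0
    exact h0
  have hEL := EL_of_critical c m hm4 hm u hcrit
  refine ⟨zext m hm u, hEL, fun i => zext_add hm u i, ?_⟩
  rintro ⟨h0, h1⟩
  have hall : ∀ i, zext m hm u i = 0 ∧ zext m hm u (i+1) = 0 := by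
    intro i
    induction i with
    | zero => exact ⟨h0, h1⟩
    | succ n ih =>
      refine ⟨ih.2, ?_⟩
      rw [show n+1+1 = n+2 from rfl, hEL n, ih.1, ih.2, GF_zero]
      ring
  have hu0 : u = 0 := by
    funext j
    have h := (hall (j:ℕ)).1
    rw [zext_lt hm u j.isLt] at h
    simpa using h
  have h2 := min_lt c hc m hm4 hm
  have h3 := hmin (fun _ => Real.sqrt (208/3))
  rw [hu0] at h3
  linarith

lemma key_exists (c : ℝ) (hc : 1/2 ≤ c) (F : ℝ × ℝ → ℝ × ℝ)
    (hF : ∀ x y : ℝ, F (x, y) = (GF c x - y, x)) :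
    {w : ℝ × ℝ | ∃ n : ℕ, 1 ≤ n ∧ F^[n] w = w}.Infinite := by
  have H : ∀ k : ℕ, ∃ z : ℕ → ℝ, (∀ i, z (i+2) = GF c (z (i+1)) - z i) ∧
      (∀ i, z (i + 2^(k+2)) = -z i) ∧ ¬(z 0 = 0 ∧ z 1 = 0) := by
    intro k
    apply exists_seq c hc
    have : 2^2 ≤ 2^(k+2) := Nat.pow_le_pow_right (by norm_num) (by omega)
    omega
  choose z hEL hanti hnz using H
  set w : ℕ → ℝ × ℝ := fun k => (z k 1, z k 0) with hw
  have horb : ∀ k i, F^[i] (w k) = (z k (i+1), z k i) := by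
    intro k i
    induction i with
    | zero => rfl
    | succ n ih =>
      rw [Function.iterate_succ_apply', ih, hF, ← hEL k n]
  have hdouble : ∀ k i, z k (i + 2^(k+3)) = z k i := by
    intro k i
    have hp : i + 2^(k+3) = (i + 2^(k+2)) + 2^(k+2) := by
      have : (2:ℕ)^(k+3) = 2^(k+2) * 2 := by rw [pow_succ]
      omega
    rw [hp, hanti, hanti, neg_neg]
  have hper : ∀ k, F^[2^(k+3)] (w k) = w k := by
    intro k
    rw [horb]
    have h1 : z k (2^(k+3) + 1) = z k 1 := by
      rw [show 2^(k+3)+1 = 1 + 2^(k+3) by omega, hdouble]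
    have h0 : z k (2^(k+3)) = z k 0 := by
      have := hdouble k 0
      simpa using this
    rw [h1, h0]
  have hneg : ∀ k, F^[2^(k+2)] (w k) = (-(z k 1), -(z k 0)) := by
    intro k
    rw [horb]
    have h1 : z k (2^(k+2) + 1) = -z k 1 := by
      rw [show 2^(k+2)+1 = 1 + 2^(k+2) by omega, hanti]
    have h0 : z k (2^(k+2)) = -z k 0 := by
      have := hanti k 0
      simpa using this
    rw [h1, h0]
  have hdist : ∀ k l, k < l → w k ≠ w l := by
    intro k l hkl heq
    have hfix : F^[2^(l+2)] (w k) = w k := by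
      have hpow : 2^(l+2) = 2^(k+3) * 2^(l-k-1) := by
        rw [← pow_add]
        congr 1
        omega
      rw [hpow, Function.iterate_mul]
      exact Function.iterate_fixed (hper k) _
    rw [heq] at hfix
    rw [hneg l] at hfix
    have h1 : -(z l 1) = z l 1 := congrArg Prod.fst hfix
    have h0 : -(z l 0) = z l 0 := congrArg Prod.snd hfix
    exact hnz l ⟨by linarith, by linarith⟩
  apply Set.infinite_of_injective_forall_mem (f := w)
  · intro a b hab
    by_contra hne
    rcases lt_trichotomy a b with h | h | h
    · exact hdist a b h hab
    · exact hne h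
    · exact hdist b a h hab.symm
  · intro k
    exact ⟨2^(k+3), Nat.one_le_two_pow, hper k⟩
end Stmt12Aux

/-- With σ = 10, r = 27, β = 8/3 and `0 < d ≤ 20`, the map
`F_d(x,y) = ((σ/d)(x − βrx/(β + x²)) + 2x − y, x)` has infinitely many periodic
points. -/
theorem stmt12 (d : ℝ) (hd0 : 0 < d) (hd20 : d ≤ 20)
    (F : ℝ × ℝ → ℝ × ℝ)
    (hF : ∀ x y : ℝ,
      F (x, y) = ((10 / d) * (x - (8 / 3) * 27 * x / (8 / 3 + x ^ 2)) + 2 * x - y, x)) :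
    {w : ℝ × ℝ | ∃ n : ℕ, 1 ≤ n ∧ F^[n] w = w}.Infinite := by
  have hc : 1/2 ≤ 10 / d := by
    rw [le_div_iff₀ hd0]
    linarith
  apply key_exists (10/d) hc F
  intro x y
  rw [hF]
  have h72 : (8:ℝ)/3 * 27 = 72 := by norm_num
  rw [GF, phiF, h72]
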